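/- Let q be a prime power, m a positive integer, ℓ a natural number with ℓ ≤ q, and let a_1, ..., a_m be a basis of F_{q^m} over F_q. Then for every multivariate polynomial φ ∈ F_q[x_1, ..., x_m] of total degree at most ℓ there exists a univariate polynomial f ∈ F_{q^m}[X] of degree at most ℓ·q^{m−1} such that for every (x_1, ..., x_m) ∈ F_q^m, f evaluated at ∑_{j=1}^m a_j x_j equals the image of φ(x_1, ..., x_m) under the embedding F_q → F_{q^m}. -/

import Mathlib

open Polynomial

/-- Every `F`-linear endomorphism of `E` is given by a linearized polynomial
of degree at most `q ^ (m-1)`. -/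
theorem aux_linearized {F E : Type*} [Field F] [Fintype F] [Field E] [Fintype E]
    [Algebra F E] (q m : ℕ) (hq : Fintype.card F = q) (hm : 0 < m)
    (hrank : Module.finrank F E = m) (π : E →ₗ[F] E) :
    ∃ L : Polynomial E, L.natDegree ≤ q ^ (m - 1) ∧ ∀ y, L.eval y = π y := by
  classical
  haveI : Nonempty (Fin m) := ⟨⟨0, hm⟩⟩
  -- characteristic
  set p := ringChar F with hpdef
  haveI hCF : CharP F p := ringChar.charP F
  haveI hCE : CharP E p := charP_of_injective_algebraMap (algebraMap F E).injective p
  obtain ⟨n, hp, hcard⟩ := FiniteField.card F p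
  haveI : Fact p.Prime := ⟨hp⟩
  have hq2 : 2 ≤ q := hq ▸ Fintype.one_lt_card
  have hqE : Fintype.card E = q ^ m := by
    rw [Module.card_eq_pow_finrank (K := F), hq, hrank]
  -- the Frobenius-power linear maps
  have hadd : ∀ (i : ℕ) (x y : E), (x + y) ^ q ^ i = x ^ q ^ i + y ^ q ^ i := by
    intro i x y
    have h : q ^ i = p ^ (n * i) := by rw [← hq, hcard, ← pow_mul]
    rw [h, add_pow_char_pow]
  have hsmul : ∀ (i : ℕ) (c : F) (y : E), (c • y) ^ q ^ i = c • y ^ q ^ i := by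
    intro i c y
    have : c ^ q ^ i = c := by rw [← hq, FiniteField.pow_card_pow]
    rw [_root_.smul_pow, this]
  set ψ : Fin m → (E →ₗ[F] E) := fun i =>
    { toFun := fun y => y ^ q ^ (i : ℕ)
      map_add' := hadd i
      map_smul' := fun c y => hsmul i c y } with hψ
  -- monoid homs, for Dedekind's independence theorem
  set M : Fin m → (E →* E) := fun i =>
    { toFun := fun y => y ^ q ^ (i : ℕ)
      map_one' := one_pow _
      map_mul' := fun x y => mul_pow x y _ } with hM
  have hMinj : Function.Injective M := by
    intro i j hij
    rcases eq_or_ne m 1 with h1 | h1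
    · have : Subsingleton (Fin m) := by rw [h1]; infer_instance
      exact Subsingleton.elim i j
    · obtain ⟨ζ, hζ⟩ := IsCyclic.exists_generator (α := Eˣ)
      have hord : orderOf ζ = q ^ m - 1 := by
        rw [orderOf_eq_card_of_forall_mem_zpowers hζ, Nat.card_eq_fintype_card, Fintype.card_units, hqE]
      have hlt : ∀ k : Fin m, q ^ (k : ℕ) < orderOf ζ := by
        intro k
        rw [hord]
        have hk1 : q ^ (k : ℕ) ≤ q ^ (m - 1) := Nat.pow_le_pow_right (by omega) (by omega)
        have hk2 : q ^ (m - 1) * 2 ≤ q ^ (m - 1) * q := Nat.mul_le_mul_left _ hq2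
        have hk3 : q ^ (m - 1) * q = q ^ m := by
          rw [← pow_succ]; congr 1; omega
        have hk4 : 2 ≤ q ^ (m - 1) := le_trans hq2 (Nat.le_self_pow (by omega) q)
        omega
      have hupow : (ζ : E) ^ q ^ (i : ℕ) = (ζ : E) ^ q ^ (j : ℕ) := by
        have := DFunLike.congr_fun hij (ζ : E)
        simpa [hM] using this
      have huu : ζ ^ q ^ (i : ℕ) = ζ ^ q ^ (j : ℕ) := Units.ext (by push_cast [hupow]; rfl)
      have := pow_injOn_Iio_orderOf (hlt i) (hlt j) huu
      exact Fin.ext (Nat.pow_right_injective hq2 this)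
  -- linear independence over E
  have hli' : LinearIndependent E (fun i => ((M i : E →* E) : E → E)) :=
    (linearIndependent_monoidHom E E).comp M hMinj
  let toFunₗ : (E →ₗ[F] E) →ₗ[E] (E → E) :=
    { toFun := fun f => ⇑f
      map_add' := fun f g => rfl
      map_smul' := fun c f => rfl }
  have hli : LinearIndependent E ψ := by
    apply LinearIndependent.of_comp toFunₗ
    convert hli' using 1
    rfl
  -- dimension count : finrank E (E →ₗ[F] E) = m
  haveI : Module.Finite F E := Module.Finite.of_finite
  let b0 : Module.Basis (Fin m) F E := Module.finBasisOfFinrankEq F E hrank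
  have hfr : Module.finrank E (E →ₗ[F] E) = m := by
    rw [← (b0.constr E (M' := E)).finrank_eq]
    simp [Module.finrank_pi]
  have hcardeq : Fintype.card (Fin m) = Module.finrank E (E →ₗ[F] E) := by
    simp [hfr]
  let b := basisOfLinearIndependentOfCardEqFinrank hli hcardeq
  have hb : ⇑b = ψ := coe_basisOfLinearIndependentOfCardEqFinrank _ _
  set c : Fin m → E := fun i => b.repr π i with hc
  have hπ : π = ∑ i, c i • ψ i := by
    conv_lhs => rw [← b.sum_repr π]
    rw [hb]
  refine ⟨∑ i : Fin m, C (c i) * X ^ q ^ (i : ℕ), ?_, ?_⟩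
  · apply natDegree_sum_le_of_forall_le
    intro i _
    exact (natDegree_C_mul_X_pow_le _ _).trans
      (Nat.pow_le_pow_right (by omega) (by omega))
  · intro y
    rw [hπ]
    simp [eval_finset_sum, LinearMap.sum_apply, LinearMap.smul_apply, smul_eq_mul, hψ]

theorem stmt_4 {F E : Type*} [Field F] [Fintype F] [Field E] [Fintype E]
    [Algebra F E] (q m ℓ : ℕ) (hq : Fintype.card F = q) (hm : 0 < m)
    (hℓ : ℓ ≤ q) (hrank : Module.finrank F E = m) (a : Module.Basis (Fin m) F E)
    (φ : MvPolynomial (Fin m) F) (hφ : φ.totalDegree ≤ ℓ) :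
    ∃ f : Polynomial E, f.natDegree ≤ ℓ * q ^ (m - 1) ∧
      ∀ x : Fin m → F,
        f.eval (∑ j, (a j : E) * algebraMap F E (x j)) =
          algebraMap F E (MvPolynomial.eval x φ) := by
  classical
  -- for each coordinate, a univariate polynomial computing it
  have key : ∀ j : Fin m, ∃ L : Polynomial E, L.natDegree ≤ q ^ (m - 1) ∧
      ∀ y, L.eval y = algebraMap F E (a.repr y j) := by
    intro j
    obtain ⟨L, h1, h2⟩ := aux_linearized q m hq hm hrank
      ((Algebra.linearMap F E).comp (a.coord j))
    exact ⟨L, h1, fun y => by simpa [Module.Basis.coord_apply] using h2 y⟩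
  choose L hLdeg hLeval using key
  set g : F →+* Polynomial E := (Polynomial.C : E →+* Polynomial E).comp (algebraMap F E)
  refine ⟨MvPolynomial.eval₂ g L φ, ?_, ?_⟩
  · rw [MvPolynomial.eval₂_eq']
    apply natDegree_sum_le_of_forall_le
    intro d hd
    calc (g (φ.coeff d) * ∏ i, L i ^ d i).natDegree
        ≤ (g (φ.coeff d)).natDegree + (∏ i, L i ^ d i).natDegree := natDegree_mul_le
      _ ≤ 0 + (∏ i, L i ^ d i).natDegree := by
          simp [g, natDegree_C]
      _ = (∏ i, L i ^ d i).natDegree := by ring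
      _ ≤ ∑ i, (L i ^ d i).natDegree := natDegree_prod_le _ _
      _ ≤ ∑ i, d i * q ^ (m - 1) := by
          refine Finset.sum_le_sum fun i _ => natDegree_pow_le.trans ?_
          exact Nat.mul_le_mul_left _ (hLdeg i)
      _ = (∑ i, d i) * q ^ (m - 1) := by rw [Finset.sum_mul]
      _ ≤ ℓ * q ^ (m - 1) := by
          apply Nat.mul_le_mul_right
          have h1 : (∑ i, d i) = d.sum fun _ e => e := by
            rw [Finsupp.sum_fintype]; intro; rfl
          rw [h1]
          exact le_trans (MvPolynomial.le_totalDegree hd) hφ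
  · intro x
    set y : E := ∑ j, (a j : E) * algebraMap F E (x j) with hy
    have hyrep : ∀ j, a.repr y j = x j := by
      have : y = ∑ j, x j • a j := by
        rw [hy]
        refine Finset.sum_congr rfl fun j _ => ?_
        rw [Algebra.smul_def, mul_comm]
      intro j
      rw [this, a.repr_sum_self]
    have step1 : (MvPolynomial.eval₂ g L φ).eval y
        = MvPolynomial.eval₂ ((Polynomial.evalRingHom y).comp g)
            (fun j => (L j).eval y) φ := by
      exact MvPolynomial.eval₂_comp_left (Polynomial.evalRingHom y) g L φ
    rw [step1]
    have hcomp : (Polynomial.evalRingHom y).comp g = algebraMap F E := by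
      ext c
      simp [g]
    have hvals : (fun j => (L j).eval y) = fun j => algebraMap F E (x j) := by
      funext j
      rw [hLeval, hyrep]
    rw [hcomp, hvals]
    have h2 := MvPolynomial.eval₂_comp_left (algebraMap F E) (RingHom.id F) x φ
    simpa [MvPolynomial.eval₂_id, Function.comp_def] using h2.symm
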